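/- Let ρ, q₀', q₁', q₂' be positive integers with q₀', q₁', q₂' pairwise coprime. The equation ρ² − (1/(q₀'q₁') + 1/(q₀'q₂') + 1/(q₁'q₂'))·ρ + 2/(q₀'q₁'q₂') = 0 holds if and only if either ρ = 1 and, up to reordering, (q₀', q₁', q₂') = (1, 1, s) for some s ∈ ℕ⁺, or ρ = 2 and (q₀', q₁', q₂') = (1, 1, 1). -/
import Mathlib

lemma int_key1 (x y z : ℤ) (hx : 1 ≤ x) (hy : 2 ≤ y) (hz : 2 ≤ z) :
    x * y * z + 2 ≠ x + y + z := by
  intro heq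
  nlinarith [mul_nonneg (by linarith : (0:ℤ) ≤ x - 1) (by nlinarith : (0:ℤ) ≤ y * z - 1),
    mul_nonneg (by linarith : (0:ℤ) ≤ y - 1) (by linarith : (0:ℤ) ≤ z - 1)]

lemma nat_case1 (a b c : ℕ) (ha : 0 < a) (hb : 0 < b) (hc : 0 < c)
    (h : a * b * c + 2 = a + b + c) :
    (a = 1 ∧ b = 1) ∨ (a = 1 ∧ c = 1) ∨ (b = 1 ∧ c = 1) := by
  have h' : (a : ℤ) * b * c + 2 = a + b + c := by exact_mod_cast h
  have ha' : (1 : ℤ) ≤ a := by exact_mod_cast ha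
  have hb' : (1 : ℤ) ≤ b := by exact_mod_cast hb
  have hc' : (1 : ℤ) ≤ c := by exact_mod_cast hc
  rcases Nat.lt_or_ge a 2 with ha2 | ha2 <;> rcases Nat.lt_or_ge b 2 with hb2 | hb2 <;>
    rcases Nat.lt_or_ge c 2 with hc2 | hc2
  · exact Or.inl ⟨by omega, by omega⟩
  · exact Or.inl ⟨by omega, by omega⟩
  · exact Or.inr (Or.inl ⟨by omega, by omega⟩)
  · exact absurd h' (int_key1 a b c ha' (by exact_mod_cast hb2) (by exact_mod_cast hc2))
  · exact Or.inr (Or.inr ⟨by omega, by omega⟩)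
  · exact absurd (by linarith : (b:ℤ) * a * c + 2 = b + a + c)
      (int_key1 b a c hb' (by exact_mod_cast ha2) (by exact_mod_cast hc2))
  · exact absurd (by linarith : (c:ℤ) * a * b + 2 = c + a + b)
      (int_key1 c a b hc' (by exact_mod_cast ha2) (by exact_mod_cast hb2))
  · exact absurd h' (int_key1 a b c ha' (by exact_mod_cast hb2) (by exact_mod_cast hc2))

lemma int_key2 (x y z : ℤ) (hx : 2 ≤ x) (hy : 1 ≤ y) (hz : 1 ≤ z) :
    2 * (x * y * z) + 1 ≠ x + y + z := by
  intro heq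
  nlinarith [mul_nonneg (by linarith : (0:ℤ) ≤ x - 2)
      (by nlinarith : (0:ℤ) ≤ 2 * (y * z) - 1),
    mul_nonneg (by linarith : (0:ℤ) ≤ y - 1) (by linarith : (0:ℤ) ≤ z - 1),
    mul_pos (by linarith : (0:ℤ) < y) (by linarith : (0:ℤ) < z)]

lemma nat_case2 (a b c : ℕ) (ha : 0 < a) (hb : 0 < b) (hc : 0 < c)
    (h : 2 * (a * b * c) + 1 = a + b + c) :
    a = 1 ∧ b = 1 ∧ c = 1 := by
  have h' : 2 * ((a : ℤ) * b * c) + 1 = a + b + c := by exact_mod_cast h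
  have ha' : (1 : ℤ) ≤ a := by exact_mod_cast ha
  have hb' : (1 : ℤ) ≤ b := by exact_mod_cast hb
  have hc' : (1 : ℤ) ≤ c := by exact_mod_cast hc
  refine ⟨?_, ?_, ?_⟩
  · by_contra hx
    exact absurd h' (int_key2 a b c (by omega) hb' hc')
  · by_contra hx
    exact absurd (by linarith : 2 * ((b:ℤ) * a * c) + 1 = b + a + c)
      (int_key2 b a c (by omega) ha' hc')
  · by_contra hx
    exact absurd (by linarith : 2 * ((c:ℤ) * a * b) + 1 = c + a + b)
      (int_key2 c a b (by omega) ha' hb')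


lemma nat_main (ρ a b c : ℕ) (hρ : 0 < ρ) (ha : 0 < a) (hb : 0 < b) (hc : 0 < c)
    (h : ρ ^ 2 * (a * b * c) + 2 = ρ * (a + b + c)) :
    (ρ = 1 ∧ ((a = 1 ∧ b = 1) ∨ (a = 1 ∧ c = 1) ∨ (b = 1 ∧ c = 1))) ∨
      (ρ = 2 ∧ a = 1 ∧ b = 1 ∧ c = 1) := by
  have hρ2 : ρ ≤ 2 := by
    by_contra hx
    have hx' : (3 : ℤ) ≤ ρ := by omega
    have h' : (ρ : ℤ) ^ 2 * (a * b * c) + 2 = ρ * (a + b + c) := by exact_mod_cast h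
    have ha' : (1 : ℤ) ≤ a := by exact_mod_cast ha
    have hb' : (1 : ℤ) ≤ b := by exact_mod_cast hb
    have hc' : (1 : ℤ) ≤ c := by exact_mod_cast hc
    have hA : (a : ℤ) ≤ a * b * c := by
      nlinarith [mul_nonneg (by linarith : (0:ℤ) ≤ (a:ℤ))
        (by nlinarith : (0:ℤ) ≤ (b:ℤ) * c - 1)]
    have hB : (b : ℤ) ≤ a * b * c := by
      nlinarith [mul_nonneg (by linarith : (0:ℤ) ≤ (b:ℤ))
        (by nlinarith : (0:ℤ) ≤ (a:ℤ) * c - 1)]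
    have hC : (c : ℤ) ≤ a * b * c := by
      nlinarith [mul_nonneg (by linarith : (0:ℤ) ≤ (c:ℤ))
        (by nlinarith : (0:ℤ) ≤ (a:ℤ) * b - 1)]
    nlinarith [mul_nonneg (mul_nonneg (by linarith : (0:ℤ) ≤ (ρ:ℤ) - 3)
        (by linarith : (0:ℤ) ≤ (ρ:ℤ))) (by nlinarith : (0:ℤ) ≤ (a:ℤ) * b * c),
      mul_le_mul_of_nonneg_left (by linarith : (a:ℤ) + b + c ≤ 3 * (a * b * c))
        (by linarith : (0:ℤ) ≤ (ρ:ℤ))]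
  have hρ12 : ρ = 1 ∨ ρ = 2 := by omega
  rcases hρ12 with rfl | rfl
  · simp only [one_pow, one_mul] at h
    exact Or.inl ⟨rfl, nat_case1 _ _ _ ha hb hc h⟩
  · right
    refine ⟨rfl, nat_case2 _ _ _ ha hb hc ?_⟩
    omega

theorem genus_zero_diophantine (ρ q₀' q₁' q₂' : ℕ)
    (hρ : 0 < ρ) (h₀ : 0 < q₀') (h₁ : 0 < q₁') (h₂ : 0 < q₂')
    (h01 : Nat.Coprime q₀' q₁') (h02 : Nat.Coprime q₀' q₂')
    (h12 : Nat.Coprime q₁' q₂') :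
    (ρ : ℚ) ^ 2
        - (1 / ((q₀' : ℚ) * q₁') + 1 / ((q₀' : ℚ) * q₂')
            + 1 / ((q₁' : ℚ) * q₂')) * ρ
        + 2 / ((q₀' : ℚ) * q₁' * q₂') = 0 ↔
      (ρ = 1 ∧ ((q₀' = 1 ∧ q₁' = 1) ∨ (q₀' = 1 ∧ q₂' = 1) ∨
        (q₁' = 1 ∧ q₂' = 1))) ∨
      (ρ = 2 ∧ q₀' = 1 ∧ q₁' = 1 ∧ q₂' = 1) := by
  have e0 : (q₀' : ℚ) ≠ 0 := Nat.cast_ne_zero.mpr h₀.ne'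
  have e1 : (q₁' : ℚ) ≠ 0 := Nat.cast_ne_zero.mpr h₁.ne'
  have e2 : (q₂' : ℚ) ≠ 0 := Nat.cast_ne_zero.mpr h₂.ne'
  have hmul : ((ρ : ℚ) ^ 2
        - (1 / ((q₀' : ℚ) * q₁') + 1 / ((q₀' : ℚ) * q₂')
            + 1 / ((q₁' : ℚ) * q₂')) * ρ
        + 2 / ((q₀' : ℚ) * q₁' * q₂')) * ((q₀' : ℚ) * q₁' * q₂')
      = (ρ : ℚ) ^ 2 * (q₀' * q₁' * q₂') + 2 - ρ * (q₀' + q₁' + q₂') := by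
    field_simp
    ring
  have key : ((ρ : ℚ) ^ 2
        - (1 / ((q₀' : ℚ) * q₁') + 1 / ((q₀' : ℚ) * q₂')
            + 1 / ((q₁' : ℚ) * q₂')) * ρ
        + 2 / ((q₀' : ℚ) * q₁' * q₂') = 0)
      ↔ (ρ ^ 2 * (q₀' * q₁' * q₂') + 2 = ρ * (q₀' + q₁' + q₂')) := by
    constructor
    · intro h
      have h' : (ρ : ℚ) ^ 2 * (q₀' * q₁' * q₂') + 2 - ρ * (q₀' + q₁' + q₂') = 0 := by
        rw [← hmul, h, zero_mul]
      have h2 : ((ρ ^ 2 * (q₀' * q₁' * q₂') + 2 : ℕ) : ℚ)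
          = ((ρ * (q₀' + q₁' + q₂') : ℕ) : ℚ) := by
        push_cast; linarith
      exact Nat.cast_inj.mp h2
    · intro h
      have h' : ((ρ ^ 2 * (q₀' * q₁' * q₂') + 2 : ℕ) : ℚ)
          = ((ρ * (q₀' + q₁' + q₂') : ℕ) : ℚ) := congrArg (fun n : ℕ => (n : ℚ)) h
      push_cast at h'
      have h2 : ((ρ : ℚ) ^ 2
        - (1 / ((q₀' : ℚ) * q₁') + 1 / ((q₀' : ℚ) * q₂')
            + 1 / ((q₁' : ℚ) * q₂')) * ρ
        + 2 / ((q₀' : ℚ) * q₁' * q₂')) * ((q₀' : ℚ) * q₁' * q₂') = 0 := by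
        rw [hmul]; linarith
      rcases mul_eq_zero.mp h2 with h3 | h3
      · exact h3
      · exact absurd h3 (by positivity)
  rw [key]
  constructor
  · intro h
    exact nat_main ρ q₀' q₁' q₂' hρ h₀ h₁ h₂ h
  · rintro (⟨rfl, (⟨rfl, rfl⟩ | ⟨rfl, rfl⟩ | ⟨rfl, rfl⟩)⟩ | ⟨rfl, rfl, rfl, rfl⟩) <;> ring
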